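/- arXiv:2405.15686 — 3 statements merged into one kernel-verified Lean document; each statement's English description precedes it below -/
import Mathlib

section
/- For the logistic function σ(x) = 1/(1+e^{-x}) and every natural number n ≥ 0, the n-th derivative is given by σ^(n)(x) = ∑_{k=1}^{n+1} (-1)^{k+1} (k-1)! · S(n+1, k) · σ(x)^k, where S denotes the Stirling numbers of the second kind. -/
/-- The logistic function. -/
noncomputable def logistic (x : ℝ) : ℝ := 1 / (1 + Real.exp (-x))

/-- Stirling numbers of the second kind. -/
def stirling2 : ℕ → ℕ → ℕ
  | 0, 0 => 1
  | 0, _ + 1 => 0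
  | _ + 1, 0 => 0
  | m + 1, n + 1 => (n + 1) * stirling2 m (n + 1) + stirling2 m n

lemma logistic_hasDerivAt (x : ℝ) :
    HasDerivAt logistic (logistic x * (1 - logistic x)) x := by
  have h1 : (0:ℝ) < 1 + Real.exp (-x) := by positivity
  have h : HasDerivAt (fun x : ℝ => 1 + Real.exp (-x)) (-Real.exp (-x)) x := by
    have := (Real.hasDerivAt_exp (-x)).comp x (hasDerivAt_neg x)
    simpa using this.const_add 1
  have h2 := h.inv h1.ne'
  have heq : logistic = fun y => (1 + Real.exp (-y))⁻¹ := funext fun y => one_div _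
  rw [heq]
  convert (show HasDerivAt (fun y => (1 + Real.exp (-y))⁻¹) _ x from h2) using 1
  beta_reduce
  field_simp
  ring

lemma stirling2_eq_zero : ∀ m k : ℕ, m < k → stirling2 m k = 0 := by
  intro m
  induction m with
  | zero => intro k hk; match k, hk with | k+1, _ => rfl
  | succ m ih =>
    intro k hk
    match k, hk with
    | l+1, hk =>
      have h1 : m < l + 1 := by omega
      have h2 : m < l := by omega
      show (l + 1) * stirling2 m (l + 1) + stirling2 m l = 0
      rw [ih _ h1, ih _ h2]; ring

lemma stirling2_succ_succ (m n : ℕ) :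
    stirling2 (m+1) (n+1) = (n + 1) * stirling2 m (n + 1) + stirling2 m n := rfl

lemma stirling2_zero' (m : ℕ) : stirling2 (m+1) 0 = 0 := rfl

theorem stmt_5 (n : ℕ) (x : ℝ) :
    iteratedDeriv n logistic x =
      ∑ k ∈ Finset.Icc 1 (n + 1),
        (-1 : ℝ) ^ (k + 1) * ((k - 1).factorial : ℝ) * (stirling2 (n + 1) k : ℝ)
          * (logistic x) ^ k := by
  induction n generalizing x with
  | zero =>
    simp [iteratedDeriv_zero, stirling2_succ_succ]
    norm_num [stirling2]
  | succ n ih =>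
    rw [iteratedDeriv_succ]
    have hfun : iteratedDeriv n logistic = fun z => ∑ k ∈ Finset.Icc 1 (n+1),
        (-1:ℝ)^(k+1) * ((k-1).factorial : ℝ) * (stirling2 (n+1) k : ℝ) * logistic z ^ k :=
      funext fun z => ih z
    rw [hfun]
    have hd : HasDerivAt (fun z => ∑ k ∈ Finset.Icc 1 (n+1),
        (-1:ℝ)^(k+1) * ((k-1).factorial : ℝ) * (stirling2 (n+1) k : ℝ) * logistic z ^ k)
        (∑ k ∈ Finset.Icc 1 (n+1),
          (-1:ℝ)^(k+1) * ((k-1).factorial : ℝ) * (stirling2 (n+1) k : ℝ) *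
            ((k:ℝ) * logistic x ^ (k-1) * (logistic x * (1 - logistic x)))) x :=
      HasDerivAt.fun_sum fun k _ => ((logistic_hasDerivAt x).pow k).const_mul _
    rw [hd.deriv]
    set y := logistic x with hy
    -- coefficient functions
    set c : ℕ → ℝ := fun k => (-1:ℝ)^(k+1) * ((k-1).factorial : ℝ) * (stirling2 (n+1) k : ℝ)
      with hc
    set g : ℕ → ℝ := fun j => ((j:ℝ)+1) * c (j+1) * y^(j+1) with hg
    set h : ℕ → ℝ := fun j => (j:ℝ) * c j * y^(j+1) with hh
    have step1 : ∑ k ∈ Finset.Icc 1 (n+1),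
          c k * ((k:ℝ) * y ^ (k-1) * (y * (1 - y)))
        = ∑ j ∈ Finset.range (n+1), (g j - h (j+1)) := by
      rw [← Finset.Ico_add_one_right_eq_Icc, Finset.sum_Ico_eq_sum_range]
      have hcard : n + 1 + 1 - 1 = n + 1 := by omega
      rw [hcard]
      refine Finset.sum_congr rfl fun j _ => ?_
      have e1 : 1 + j = j + 1 := by omega
      rw [e1]
      have e2 : j + 1 - 1 = j := by omega
      rw [e2]
      simp only [hg, hh]
      push_cast
      ring
    rw [step1, Finset.sum_sub_distrib]
    have hgz : g (n+1) = 0 := by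
      simp only [hg, hc]
      rw [stirling2_eq_zero (n+1) (n+2) (by omega)]
      push_cast; ring
    have hhz : h 0 = 0 := by simp [hh]
    have e3 : ∑ j ∈ Finset.range (n+1), g j = ∑ j ∈ Finset.range (n+1+1), g j := by
      rw [Finset.sum_range_succ g (n+1), hgz, add_zero]
    have e4 : ∑ j ∈ Finset.range (n+1), h (j+1) = ∑ j ∈ Finset.range (n+1+1), h j := by
      rw [Finset.sum_range_succ' h (n+1), hhz, add_zero]
    rw [e3, e4, ← Finset.sum_sub_distrib]
    -- rewrite RHS
    rw [← Finset.Ico_add_one_right_eq_Icc, Finset.sum_Ico_eq_sum_range]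
    have hcard2 : n + 1 + 1 + 1 - 1 = n + 1 + 1 := by omega
    rw [hcard2]
    refine Finset.sum_congr rfl fun j _ => ?_
    have e1 : 1 + j = j + 1 := by omega
    rw [e1]
    have e2 : j + 1 - 1 = j := by omega
    rw [e2]
    simp only [hg, hh, hc]
    rw [stirling2_succ_succ (n+1) j]
    have e5 : j + 1 - 1 = j := by omega
    rw [e5]
    rcases j with _ | j
    · simp [stirling2_zero']
    · have e7 : j + 1 - 1 = j := by omega
      rw [e7]
      push_cast [Nat.factorial_succ]
      ring
end

section
/- For every natural number n ≥ 1 and real x, the n-th derivative of the logistic function satisfies |σ^(n)(x)| ≤ (n+1)! · max_{1 ≤ k ≤ n+1} S(n+1, k) · σ(min(x, -x)), where S denotes Stirling numbers of the second kind. In particular |σ^(n)(x)| ≤ (n+1)! · max_{1 ≤ k ≤ n+1} S(n+1,k) · min(σ(x), σ(-x)). -/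
namespace Stmt10Aux

lemma one_add_exp_pos (x : ℝ) : 0 < 1 + Real.exp (-x) := by positivity

lemma logistic_pos (x : ℝ) : 0 < logistic x := by
  unfold logistic; positivity

lemma logistic_lt_one (x : ℝ) : logistic x < 1 := by
  unfold logistic
  rw [div_lt_one (one_add_exp_pos x)]
  linarith [Real.exp_pos (-x)]

lemma logistic_mono : Monotone logistic := by
  intro u v huv
  unfold logistic
  have h : Real.exp (-v) ≤ Real.exp (-u) := Real.exp_le_exp.2 (by linarith)
  apply one_div_le_one_div_of_le (one_add_exp_pos v)
  linarith

lemma hasDerivAt_logistic (x : ℝ) :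
    HasDerivAt logistic (logistic x - logistic x ^ 2) x := by
  have h1 : HasDerivAt (fun y : ℝ => 1 + Real.exp (-y)) (-Real.exp (-x)) x := by
    simpa using ((Real.hasDerivAt_exp (-x)).comp x (hasDerivAt_neg x)).const_add 1
  have h2 := h1.inv (ne_of_gt (one_add_exp_pos x))
  have heq : (fun y : ℝ => 1 + Real.exp (-y))⁻¹ = logistic := by
    funext y; simp [logistic]
  have hne : (1 + Real.exp (-x)) ≠ 0 := ne_of_gt (one_add_exp_pos x)
  have hval : -(-Real.exp (-x)) / (1 + Real.exp (-x)) ^ 2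
      = logistic x - logistic x ^ 2 := by
    unfold logistic
    field_simp
    ring
  rw [heq, hval] at h2
  exact h2

/-- the coefficients of the n-th derivative as a polynomial in σ -/
noncomputable def a (n k : ℕ) : ℝ :=
  (-1 : ℝ) ^ (k + 1) * ((k - 1).factorial : ℝ) * (stirling2 (n + 1) k : ℝ)

lemma stirling2_eq_zero {m k : ℕ} (h : m < k) : stirling2 m k = 0 := by
  induction m generalizing k with
  | zero =>
    cases k with
    | zero => omega
    | succ k => rfl
  | succ m ih =>
    cases k with
    | zero => omega
    | succ k =>
      simp only [stirling2]
      rw [ih (by omega), ih (by omega)]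
      simp

lemma a_zero (n : ℕ) : a n 0 = 0 := by
  simp [a, stirling2]

lemma a_rec (n i : ℕ) : a (n + 1) (i + 1) = ((i : ℝ) + 1) * a n (i + 1) - (i : ℝ) * a n i := by
  cases i with
  | zero =>
    simp only [a, stirling2]
    push_cast
    ring
  | succ i =>
    simp only [a, stirling2, Nat.add_sub_cancel, Nat.factorial_succ]
    push_cast
    ring

lemma formula (n : ℕ) (x : ℝ) :
    iteratedDeriv n logistic x = ∑ k ∈ Finset.range (n + 2), a n k * logistic x ^ k := by
  induction n generalizing x with
  | zero =>
    simp [Finset.sum_range_succ, a, stirling2]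
  | succ n ih =>
    rw [iteratedDeriv_succ]
    have hfun : iteratedDeriv n logistic
        = fun y => ∑ k ∈ Finset.range (n + 2), a n k * logistic y ^ k := funext ih
    rw [hfun]
    have hd : HasDerivAt (fun y => ∑ k ∈ Finset.range (n + 2), a n k * logistic y ^ k)
        (∑ k ∈ Finset.range (n + 2),
          a n k * ((k : ℝ) * logistic x ^ (k - 1) * (logistic x - logistic x ^ 2))) x := by
      apply HasDerivAt.fun_sum
      intro k _
      exact ((hasDerivAt_logistic x).pow k).const_mul (a n k)
    rw [hd.deriv]
    set t := logistic x with ht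
    have hz : a n (n + 2) = 0 := by
      simp [a, stirling2_eq_zero (show n + 1 < n + 2 by omega)]
    calc ∑ k ∈ Finset.range (n + 2), a n k * ((k : ℝ) * t ^ (k - 1) * (t - t ^ 2))
        = ∑ k ∈ Finset.range (n + 2), ((k : ℝ) * a n k * t ^ k - (k : ℝ) * a n k * t ^ (k + 1)) := by
          apply Finset.sum_congr rfl
          intro k _
          cases k with
          | zero => simp
          | succ i =>
            simp only [Nat.add_sub_cancel]
            push_cast
            ring
      _ = (∑ k ∈ Finset.range (n + 3), (k : ℝ) * a n k * t ^ k)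
          - ∑ k ∈ Finset.range (n + 2), (k : ℝ) * a n k * t ^ (k + 1) := by
          rw [Finset.sum_sub_distrib]
          congr 1
          rw [Finset.sum_range_succ (fun k => (k : ℝ) * a n k * t ^ k) (n + 2), hz]
          simp
      _ = ∑ k ∈ Finset.range (n + 3), a (n + 1) k * t ^ k := by
          rw [Finset.sum_range_succ' (fun k => (k : ℝ) * a n k * t ^ k) (n + 2),
            Finset.sum_range_succ' (fun k => a (n + 1) k * t ^ k) (n + 2)]
          simp only [Nat.cast_zero, zero_mul, add_zero, a_zero, pow_zero, mul_one]
          rw [← Finset.sum_sub_distrib]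
          apply Finset.sum_congr rfl
          intro i _
          rw [a_rec]
          push_cast
          ring

lemma abs_le_bound (n : ℕ) (x : ℝ) :
    |iteratedDeriv n logistic x| ≤
      ((n + 1).factorial : ℝ) * (((Finset.Icc 1 (n + 1)).sup (stirling2 (n + 1)) : ℕ) : ℝ)
        * logistic x := by
  rw [formula]
  set M := (((Finset.Icc 1 (n + 1)).sup (stirling2 (n + 1)) : ℕ) : ℝ) with hM
  have hsplit : Finset.range (n + 2) = insert 0 (Finset.Icc 1 (n + 1)) := by
    ext k; simp; omega
  rw [hsplit, Finset.sum_insert (by simp), a_zero]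
  simp only [zero_mul, zero_add]
  have hσ0 : (0 : ℝ) ≤ logistic x := (logistic_pos x).le
  calc |∑ k ∈ Finset.Icc 1 (n + 1), a n k * logistic x ^ k|
      ≤ ∑ k ∈ Finset.Icc 1 (n + 1), |a n k * logistic x ^ k| :=
        Finset.abs_sum_le_sum_abs _ _
    _ ≤ ∑ _k ∈ Finset.Icc 1 (n + 1), (n.factorial : ℝ) * M * logistic x := by
        apply Finset.sum_le_sum
        intro k hk
        simp only [Finset.mem_Icc] at hk
        have habs : |a n k * logistic x ^ k|
            = ((k - 1).factorial : ℝ) * (stirling2 (n + 1) k : ℝ) * logistic x ^ k := by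
          rw [abs_mul, abs_pow, abs_of_nonneg hσ0]
          simp [a, abs_mul, abs_pow]
        rw [habs]
        have hfact : ((k - 1).factorial : ℝ) ≤ (n.factorial : ℝ) := by
          exact_mod_cast Nat.factorial_le (by omega)
        have hS : (stirling2 (n + 1) k : ℝ) ≤ M := by
          rw [hM]
          exact_mod_cast Finset.le_sup (Finset.mem_Icc.2 ⟨hk.1, hk.2⟩)
        have hpow : logistic x ^ k ≤ logistic x := by
          have := pow_le_pow_of_le_one hσ0 (logistic_lt_one x).le hk.1
          simpa using this
        have h1 : ((k - 1).factorial : ℝ) * (stirling2 (n + 1) k : ℝ)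
            ≤ (n.factorial : ℝ) * M := by
          apply mul_le_mul hfact hS (by positivity) (by positivity)
        exact mul_le_mul h1 hpow (by positivity) (by positivity)
    _ = ((n + 1).factorial : ℝ) * M * logistic x := by
        rw [Finset.sum_const, Nat.card_Icc]
        simp only [nsmul_eq_mul, Nat.factorial_succ]
        push_cast
        ring

lemma logistic_neg (y : ℝ) : logistic (-y) = 1 - logistic y := by
  unfold logistic
  rw [neg_neg]
  have h1 : (1 : ℝ) + Real.exp y ≠ 0 := by positivity
  have h2 : (1 : ℝ) + Real.exp (-y) ≠ 0 := by positivity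
  have h3 : Real.exp y * Real.exp (-y) = 1 := by rw [← Real.exp_add]; simp
  field_simp
  nlinarith [h3]

lemma iteratedDeriv_one_sub (n : ℕ) (hn : 1 ≤ n) (x : ℝ) :
    iteratedDeriv n (fun y => 1 - logistic y) x = -iteratedDeriv n logistic x := by
  induction n generalizing x with
  | zero => omega
  | succ n ih =>
    rw [iteratedDeriv_succ, iteratedDeriv_succ]
    rcases Nat.eq_zero_or_pos n with h0 | h1
    · subst h0
      simp only [iteratedDeriv_zero]
      have h := HasDerivAt.const_sub (1 : ℝ) (hasDerivAt_logistic x)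
      rw [h.deriv, (hasDerivAt_logistic x).deriv]
    · have hfun : iteratedDeriv n (fun y => 1 - logistic y)
          = fun y => -iteratedDeriv n logistic y := funext (ih h1)
      rw [hfun, deriv.fun_neg]

lemma abs_neg_eq (n : ℕ) (hn : 1 ≤ n) (x : ℝ) :
    |iteratedDeriv n logistic x| = |iteratedDeriv n logistic (-x)| := by
  have h1 : iteratedDeriv n (fun y => logistic (-y)) x
      = (-1 : ℝ) ^ n • iteratedDeriv n logistic (-x) :=
    iteratedDeriv_comp_neg n logistic x
  have h2 : (fun y => logistic (-y)) = fun y => 1 - logistic y := funext logistic_neg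
  rw [h2, iteratedDeriv_one_sub n hn x] at h1
  rw [← abs_neg (iteratedDeriv n logistic x), h1, smul_eq_mul, abs_mul, abs_pow, abs_neg,
    abs_one, one_pow, one_mul]

end Stmt10Aux

open Stmt10Aux in
theorem stmt_10 (n : ℕ) (hn : 1 ≤ n) (x : ℝ) :
    |iteratedDeriv n logistic x| ≤
      ((n + 1).factorial : ℝ) * (((Finset.Icc 1 (n + 1)).sup (stirling2 (n + 1)) : ℕ) : ℝ)
        * logistic (min x (-x)) ∧
    |iteratedDeriv n logistic x| ≤
      ((n + 1).factorial : ℝ) * (((Finset.Icc 1 (n + 1)).sup (stirling2 (n + 1)) : ℕ) : ℝ)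
        * min (logistic x) (logistic (-x)) := by
  set C := ((n + 1).factorial : ℝ) * (((Finset.Icc 1 (n + 1)).sup (stirling2 (n + 1)) : ℕ) : ℝ)
    with hC
  have hC0 : 0 ≤ C := by positivity
  have h1 : |iteratedDeriv n logistic x| ≤ C * logistic x := abs_le_bound n x
  have h2 : |iteratedDeriv n logistic x| ≤ C * logistic (-x) := by
    rw [abs_neg_eq n hn x]; exact abs_le_bound n (-x)
  have hmin : C * min (logistic x) (logistic (-x))
      = min (C * logistic x) (C * logistic (-x)) := mul_min_of_nonneg _ _ hC0
  have hmain : |iteratedDeriv n logistic x| ≤ C * min (logistic x) (logistic (-x)) := by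
    rw [hmin]; exact le_min h1 h2
  refine ⟨?_, hmain⟩
  rw [logistic_mono.map_min]
  exact hmain
end

section
/- For every natural number n ≥ 1 and every real x, the n-th derivative of the logistic function is bounded: |σ^(n)(x)| ≤ n! · ∑_{k=1}^{n+1} S(n+1,k). -/
lemma one_add_exp_pos (x : ℝ) : 0 < 1 + Real.exp (-x) := by positivity

lemma logistic_pos (x : ℝ) : 0 < logistic x := by
  unfold logistic; positivity

lemma logistic_le_one (x : ℝ) : logistic x ≤ 1 := by
  unfold logistic
  rw [div_le_one (one_add_exp_pos x)]
  nlinarith [Real.exp_pos (-x)]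

lemma hasDerivAt_logistic (x : ℝ) :
    HasDerivAt logistic (logistic x - logistic x ^ 2) x := by
  have h1 : HasDerivAt (fun y : ℝ => 1 + Real.exp (-y)) (-Real.exp (-x)) x := by
    have := ((Real.hasDerivAt_exp (-x)).comp x (hasDerivAt_neg x)).const_add 1
    simpa using this
  have h2 := h1.inv (ne_of_gt (one_add_exp_pos x))
  have heq : (fun y : ℝ => 1 + Real.exp (-y))⁻¹ = logistic := by
    funext y; simp [logistic, one_div]
  rw [heq] at h2
  refine h2.congr_deriv ?_
  have hp := one_add_exp_pos x
  unfold logistic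
  field_simp
  ring

/-- Exact formula for the n-th derivative of the logistic function. -/
lemma iteratedDeriv_logistic_formula (n : ℕ) (x : ℝ) :
    iteratedDeriv n logistic x =
      ∑ k ∈ Finset.range (n + 1),
        ((-1 : ℝ) ^ k * k.factorial * (stirling2 (n + 1) (k + 1) : ℝ)) *
          logistic x ^ (k + 1) := by
  induction n generalizing x with
  | zero =>
    have : stirling2 1 1 = 1 := rfl
    simp [this]
  | succ n ih =>
    rw [iteratedDeriv_succ]
    have hfun : iteratedDeriv n logistic = fun y =>
        ∑ k ∈ Finset.range (n + 1),
          ((-1 : ℝ) ^ k * k.factorial * (stirling2 (n + 1) (k + 1) : ℝ)) *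
            logistic y ^ (k + 1) := funext fun y => ih y
    rw [hfun]
    set s := logistic x with hs
    have hD : HasDerivAt (fun y =>
        ∑ k ∈ Finset.range (n + 1),
          ((-1 : ℝ) ^ k * k.factorial * (stirling2 (n + 1) (k + 1) : ℝ)) *
            logistic y ^ (k + 1))
        (∑ k ∈ Finset.range (n + 1),
          ((-1 : ℝ) ^ k * k.factorial * (stirling2 (n + 1) (k + 1) : ℝ)) *
            ((k + 1 : ℕ) * s ^ k * (s - s ^ 2))) x := by
      apply HasDerivAt.fun_sum
      intro k _
      exact ((hasDerivAt_logistic x).pow (k + 1)).const_mul _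
    rw [hD.deriv]
    -- now pure algebra
    have hA : ∀ k : ℕ,
        ((-1 : ℝ) ^ k * k.factorial * (stirling2 (n + 1) (k + 1) : ℝ)) *
            ((k + 1 : ℕ) * s ^ k * (s - s ^ 2))
          = ((-1 : ℝ) ^ k * k.factorial * (stirling2 (n + 1) (k + 1) : ℝ) * (k + 1))
              * s ^ (k + 1)
            - ((-1 : ℝ) ^ k * k.factorial * (stirling2 (n + 1) (k + 1) : ℝ) * (k + 1))
              * s ^ (k + 2) := by
      intro k; push_cast; ring
    rw [Finset.sum_congr rfl fun k _ => hA k, Finset.sum_sub_distrib]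
    -- S1 : extend to range (n+2)
    have hzero : (stirling2 (n + 1) (n + 2) : ℝ) = 0 := by
      rw [stirling2_eq_zero (n + 1) (n + 2) (by omega)]; simp
    have hS1 : ∑ k ∈ Finset.range (n + 1),
        ((-1 : ℝ) ^ k * k.factorial * (stirling2 (n + 1) (k + 1) : ℝ) * (k + 1)) * s ^ (k + 1)
        = ∑ k ∈ Finset.range (n + 2),
        ((-1 : ℝ) ^ k * k.factorial * (stirling2 (n + 1) (k + 1) : ℝ) * (k + 1)) * s ^ (k + 1) := by
      have hx := Finset.sum_range_succ (fun k =>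
        ((-1 : ℝ) ^ k * k.factorial * (stirling2 (n + 1) (k + 1) : ℝ) * (k + 1)) * s ^ (k + 1)) (n + 1)
      rw [hx, hzero]
      ring
    have hS2 : ∑ k ∈ Finset.range (n + 1),
        ((-1 : ℝ) ^ k * k.factorial * (stirling2 (n + 1) (k + 1) : ℝ) * (k + 1)) * s ^ (k + 2)
        = ∑ k ∈ Finset.range (n + 2),
        (if k = 0 then (0 : ℝ) else
          ((-1 : ℝ) ^ (k - 1) * (k - 1).factorial * (stirling2 (n + 1) k : ℝ) * k) * s ^ (k + 1)) := by
      rw [Finset.sum_range_succ' (fun k =>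
        (if k = 0 then (0 : ℝ) else
          ((-1 : ℝ) ^ (k - 1) * (k - 1).factorial * (stirling2 (n + 1) k : ℝ) * k) * s ^ (k + 1))) (n + 1)]
      simp
    rw [hS1, hS2, ← Finset.sum_sub_distrib]
    apply Finset.sum_congr rfl
    intro k _
    cases k with
    | zero =>
      have h0 : stirling2 (n + 2) 1 = 1 * stirling2 (n + 1) 1 + stirling2 (n + 1) 0 := rfl
      have h00 : stirling2 (n + 1) 0 = 0 := rfl
      simp [h0, h00]
    | succ j =>
      have hrec : stirling2 (n + 2) (j + 2) =
          (j + 2) * stirling2 (n + 1) (j + 2) + stirling2 (n + 1) (j + 1) := rfl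
      have hfac : ((j + 1).factorial : ℝ) = (j + 1) * (j.factorial : ℝ) := by
        push_cast [Nat.factorial_succ]; ring
      simp only [Nat.succ_ne_zero, if_false, Nat.succ_sub_one, hrec]
      push_cast [hfac]
      ring

theorem stmt_15 (n : ℕ) (hn : 1 ≤ n) (x : ℝ) :
    |iteratedDeriv n logistic x| ≤
      (n.factorial : ℝ) * ∑ k ∈ Finset.Icc 1 (n + 1), (stirling2 (n + 1) k : ℝ) := by
  rw [iteratedDeriv_logistic_formula n x]
  have habs : |logistic x| ≤ 1 := by
    rw [abs_of_pos (logistic_pos x)]; exact logistic_le_one x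
  calc |∑ k ∈ Finset.range (n + 1),
        ((-1 : ℝ) ^ k * k.factorial * (stirling2 (n + 1) (k + 1) : ℝ)) * logistic x ^ (k + 1)|
      ≤ ∑ k ∈ Finset.range (n + 1),
        |((-1 : ℝ) ^ k * k.factorial * (stirling2 (n + 1) (k + 1) : ℝ)) * logistic x ^ (k + 1)| :=
        Finset.abs_sum_le_sum_abs _ _
    _ ≤ ∑ k ∈ Finset.range (n + 1), (n.factorial : ℝ) * (stirling2 (n + 1) (k + 1) : ℝ) := by
        apply Finset.sum_le_sum
        intro k hk
        rw [abs_mul, abs_mul, abs_mul, abs_pow, abs_pow]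
        have h1 : |(-1 : ℝ)| ^ k = 1 := by simp
        have h2 : |logistic x| ^ (k + 1) ≤ 1 :=
          pow_le_one₀ (abs_nonneg _) habs
        have h3 : |(k.factorial : ℝ)| = (k.factorial : ℝ) := abs_of_nonneg (by positivity)
        have h4 : |(stirling2 (n + 1) (k + 1) : ℝ)| = (stirling2 (n + 1) (k + 1) : ℝ) :=
          abs_of_nonneg (by positivity)
        have h5 : (k.factorial : ℝ) ≤ (n.factorial : ℝ) := by
          exact_mod_cast Nat.factorial_le (by
            have := Finset.mem_range.mp hk; omega)
        rw [h1, h3, h4]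
        calc 1 * (k.factorial : ℝ) * (stirling2 (n + 1) (k + 1) : ℝ) * |logistic x| ^ (k + 1)
            ≤ 1 * (k.factorial : ℝ) * (stirling2 (n + 1) (k + 1) : ℝ) * 1 := by
              apply mul_le_mul_of_nonneg_left h2; positivity
          _ = (k.factorial : ℝ) * (stirling2 (n + 1) (k + 1) : ℝ) := by ring
          _ ≤ (n.factorial : ℝ) * (stirling2 (n + 1) (k + 1) : ℝ) :=
              mul_le_mul_of_nonneg_right h5 (by positivity)
    _ = (n.factorial : ℝ) * ∑ k ∈ Finset.range (n + 1), (stirling2 (n + 1) (k + 1) : ℝ) := by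
        rw [Finset.mul_sum]
    _ = (n.factorial : ℝ) * ∑ k ∈ Finset.Icc 1 (n + 1), (stirling2 (n + 1) k : ℝ) := by
        congr 1
        have : Finset.Icc 1 (n + 1) = Finset.Ico 1 (n + 2) := by
          rw [show n + 2 = n + 1 + 1 by rfl, Finset.Ico_add_one_right_eq_Icc]
        rw [this, Finset.sum_Ico_eq_sum_range]
        apply Finset.sum_congr (by norm_num)
        intro k _
        rw [add_comm 1 k]
end
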